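/- arXiv:2203.00103 — 2 statements merged into one kernel-verified Lean document; each statement's English description precedes it below -/
import Mathlib

section
/- Let A₀, …, A_{r−1} be XP operators of precision N with binary x-components, let S_Z be a set of diagonal XP operators of precision N, and let G be the subgroup of the group of invertible 2^n × 2^n complex matrices generated by {A₀, …, A_{r−1}} ∪ S_Z. Let e : Fin n → Fin 2 be a bit string such that B.mulVec |e⟩ = |e⟩ for every diagonal matrix B ∈ G. Then for every v : Fin r → Fin 2 and every diagonal matrix B ∈ G, B.mulVec ((A₀^(v 0) * ⋯ * A_{r−1}^(v (r−1))).mulVec |e⟩) = (A₀^(v 0) * ⋯ * A_{r−1}^(v (r−1))).mulVec |e⟩; that is, the set of basis labels fixed by all diagonal elements of G is closed under adding (mod 2) any sum of the x-components of the A_i. -/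
open Matrix

/-- `ω = exp(πi/N)`. -/
noncomputable def omN (N : ℕ) : ℂ := Complex.exp (Real.pi * Complex.I / N)

/-- The Pauli X matrix. -/
def Xm : Matrix (Fin 2) (Fin 2) ℂ := !![0, 1; 1, 0]

/-- The precision-`N` phase matrix `P = diag(1, ω²)`. -/
noncomputable def Pm (N : ℕ) : Matrix (Fin 2) (Fin 2) ℂ := !![1, 0; 0, (omN N) ^ 2]

/-- The precision-`N` XP operator `XP_N(p|x|z)` on `n` qubits, the matrix indexed by bit
strings whose `(f, e)` entry is `ω^p * ∏ i, (X^(x i) * P^(z i)) (f i) (e i)`. -/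
noncomputable def XP (N n : ℕ) (p : ℤ) (x z : Fin n → ℤ) :
    Matrix (Fin n → Fin 2) (Fin n → Fin 2) ℂ :=
  Matrix.of fun f e => (omN N) ^ p * ∏ i, ((Xm ^ (x i)) * (Pm N) ^ (z i)) (f i) (e i)

/-- The antisymmetric operator `D_N(z) = XP_N(∑ i, z i | 0 | -z)`. -/
noncomputable def DN (N n : ℕ) (z : Fin n → ℤ) :
    Matrix (Fin n → Fin 2) (Fin n → Fin 2) ℂ :=
  XP N n (∑ i, z i) 0 (-z)

/-- A vector is binary if every entry is 0 or 1. -/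
def IsBinary {n : ℕ} (x : Fin n → ℤ) : Prop := ∀ i, x i = 0 ∨ x i = 1

abbrev Mat (n : ℕ) := Matrix (Fin n → Fin 2) (Fin n → Fin 2) ℂ

def Mono {n : ℕ} (M : Mat n) : Prop :=
  ∃ σ : (Fin n → Fin 2) ≃ (Fin n → Fin 2), ∃ c : (Fin n → Fin 2) → ℂ,
    (∀ e, c e ≠ 0) ∧ ∀ f e, M f e = if f = σ e then c e else 0

lemma mono_one {n : ℕ} : Mono (1 : Mat n) :=
  ⟨Equiv.refl _, fun _ => 1, fun _ => one_ne_zero, fun f e => by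
    simp [Matrix.one_apply]; congr⟩

lemma Mono.mul {n : ℕ} {M M' : Mat n} (h : Mono M) (h' : Mono M') : Mono (M * M') := by
  obtain ⟨σ, c, hc, hM⟩ := h
  obtain ⟨σ', c', hc', hM'⟩ := h'
  refine ⟨σ'.trans σ, fun e => c (σ' e) * c' e,
    fun e => mul_ne_zero (hc _) (hc' _), ?_⟩
  intro f e
  rw [Matrix.mul_apply, Finset.sum_eq_single (σ' e)]
  · rw [hM, hM']
    by_cases hfe : f = σ (σ' e) <;> simp [hfe, Equiv.trans_apply]
  · intro j _ hj; rw [hM', if_neg hj, mul_zero]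
  · simp

lemma Mono.pow {n : ℕ} {M : Mat n} (h : Mono M) : ∀ k : ℕ, Mono (M ^ k)
  | 0 => by rw [pow_zero]; exact mono_one
  | (k+1) => by rw [pow_succ]; exact (Mono.pow h k).mul h

lemma mono_list_prod {n : ℕ} : ∀ l : List (Mat n), (∀ M ∈ l, Mono M) → Mono l.prod
  | [], _ => by simpa using mono_one
  | (M :: l), h => by
      rw [List.prod_cons]
      exact (h M (by simp)).mul (mono_list_prod l fun M' hM' => h M' (by simp [hM']))

lemma Mono.exists_unit {n : ℕ} {M : Mat n} (h : Mono M) : ∃ m : (Mat n)ˣ, ↑m = M := by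
  obtain ⟨σ, c, hc, hM⟩ := h
  set L : Mat n := Matrix.of fun a b => if b = σ a then (c a)⁻¹ else 0 with hL
  have h1 : L * M = 1 := by
    ext a b
    rw [Matrix.mul_apply, Finset.sum_eq_single (σ a)]
    · rw [hM]
      by_cases hab : a = b
      · subst hab; simp [hL, inv_mul_cancel₀ (hc a), Matrix.one_apply]
      · simp [hL, Matrix.one_apply, hab, fun hh : σ a = σ b => hab (σ.injective hh)]
    · intro j _ hj; rw [hL]; simp [hj]
    · simp
  have h2 : M * L = 1 := by
    ext a b
    rw [Matrix.mul_apply, Finset.sum_eq_single (σ.symm b)]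
    · rw [hM]
      by_cases hab : a = b
      · subst hab; simp [hL, mul_inv_cancel₀ (hc (σ.symm a)), Matrix.one_apply]
      · have : ¬ a = σ (σ.symm b) := by rw [Equiv.apply_symm_apply]; exact hab
        simp [hL, Matrix.one_apply, hab, this]
    · intro j _ hj
      rw [hL]
      have : ¬ b = σ j := fun hb => hj (by rw [hb, Equiv.symm_apply_apply])
      simp [this]
    · simp
  exact ⟨⟨M, L, h2, h1⟩, rfl⟩

lemma Mono.conj_isDiag {n : ℕ} {M : Mat n} (h : Mono M) (m : (Mat n)ˣ) (hm : (↑m : Mat n) = M)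
    {B : Mat n} (hB : B.IsDiag) : ((↑(m⁻¹) : Mat n) * B * ↑m).IsDiag := by
  obtain ⟨σ, c, hc, hM⟩ := h
  set L : Mat n := Matrix.of fun a b => if b = σ a then (c a)⁻¹ else 0 with hL
  have h1 : L * M = 1 := by
    ext a b
    rw [Matrix.mul_apply, Finset.sum_eq_single (σ a)]
    · rw [hM]
      by_cases hab : a = b
      · subst hab; simp [hL, inv_mul_cancel₀ (hc a), Matrix.one_apply]
      · simp [hL, Matrix.one_apply, hab, fun hh : σ a = σ b => hab (σ.injective hh)]
    · intro j _ hj; rw [hL]; simp [hj]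
    · simp
  have hLinv : (↑(m⁻¹) : Mat n) = L := by
    calc (↑(m⁻¹) : Mat n) = 1 * ↑(m⁻¹) := (one_mul _).symm
      _ = (L * M) * ↑(m⁻¹) := by rw [h1]
      _ = L * (↑m * ↑(m⁻¹)) := by rw [hm, mul_assoc]
      _ = L := by rw [Units.mul_inv, mul_one]
  intro i j hij
  rw [hLinv, hm]
  rw [Matrix.mul_apply, Finset.sum_eq_single (σ j)]
  · have : (L * B) i (σ j) = 0 := by
      rw [Matrix.mul_apply, Finset.sum_eq_single (σ i)]
      · rw [hB (show σ i ≠ σ j from fun hh => hij (σ.injective hh)), mul_zero]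
      · intro l _ hl; rw [hL]; simp [hl]
      · simp
    rw [this, zero_mul]
  · intro k _ hk; rw [hM, if_neg hk, mul_zero]
  · simp

lemma diagonal_zpow' {m : Type*} [Fintype m] [DecidableEq m] (d : m → ℂ)
    (hd : ∀ i, d i ≠ 0) (z : ℤ) :
    Matrix.diagonal d ^ z = Matrix.diagonal fun i => d i ^ z := by
  obtain (k | k) := z
  · simp only [Int.ofNat_eq_coe, zpow_natCast, Matrix.diagonal_pow]
    rfl
  · rw [zpow_negSucc, Matrix.diagonal_pow, Matrix.inv_eq_right_inv]
    rw [Matrix.diagonal_mul_diagonal]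
    rw [← Matrix.diagonal_one]
    apply congrArg Matrix.diagonal
    funext i
    show d i ^ (k+1) * d i ^ (Int.negSucc k) = 1
    rw [zpow_negSucc, mul_inv_cancel₀ (pow_ne_zero _ (hd i))]

lemma Pm_eq_diagonal (N : ℕ) : Pm N = Matrix.diagonal ![1, omN N ^ 2] := by
  ext a b
  fin_cases a <;> fin_cases b <;> simp [Pm, Matrix.diagonal]

lemma omN_ne_zero (N : ℕ) : omN N ≠ 0 := Complex.exp_ne_zero _

lemma Pm_zpow (N : ℕ) (z : ℤ) :
    Pm N ^ z = Matrix.diagonal ![1, omN N ^ (2 * z)] := by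
  rw [Pm_eq_diagonal, diagonal_zpow']
  · apply congrArg Matrix.diagonal
    funext i
    fin_cases i
    · simp
    · show (omN N ^ 2) ^ z = omN N ^ (2 * z)
      rw [← zpow_natCast (omN N) 2, ← _root_.zpow_mul]
      norm_num
  · intro i
    fin_cases i
    · exact one_ne_zero
    · exact pow_ne_zero _ (omN_ne_zero N)

lemma single_qubit (N : ℕ) (x z : ℤ) (hx : x = 0 ∨ x = 1) :
    ∃ d : Fin 2 → ℂ, (∀ b, d b ≠ 0) ∧
      ∀ a b : Fin 2, (Xm ^ x * Pm N ^ z) a b =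
        if a = b + (if x = 0 then 0 else 1) then d b else 0 := by
  refine ⟨![1, omN N ^ (2 * z)], ?_, ?_⟩
  · intro b
    fin_cases b
    · exact one_ne_zero
    · exact zpow_ne_zero _ (omN_ne_zero N)
  · rcases hx with h | h <;> subst h <;> intro a b <;>
      fin_cases a <;> fin_cases b <;>
      simp [Pm_zpow, Xm, Matrix.mul_apply, Fin.sum_univ_two, Matrix.diagonal,
        zpow_zero, zpow_one]

lemma mono_XP {N n : ℕ} (p : ℤ) (x z : Fin n → ℤ) (hx : IsBinary x) :
    Mono (XP N n p x z) := by
  choose d hd hM using fun i => single_qubit N (x i) (z i) (hx i)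
  set t : Fin n → Fin 2 := fun i => if x i = 0 then 0 else 1 with ht
  refine ⟨Equiv.addRight t, fun e => omN N ^ p * ∏ i, d i (e i),
    fun e => mul_ne_zero (zpow_ne_zero _ (omN_ne_zero N))
      (Finset.prod_ne_zero_iff.2 fun i _ => hd i (e i)), ?_⟩
  intro f e
  show omN N ^ p * ∏ i, ((Xm ^ (x i)) * (Pm N) ^ (z i)) (f i) (e i) = _
  by_cases hf : f = Equiv.addRight t e
  · rw [if_pos hf]
    congr 1
    refine Finset.prod_congr rfl fun i _ => ?_
    rw [hM i, if_pos]
    rw [hf]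
    rfl
  · rw [if_neg hf]
    have hne : ∃ i, f i ≠ e i + t i := by
      by_contra hc
      push_neg at hc
      exact hf (funext fun i => hc i)
    obtain ⟨i, hi⟩ := hne
    rw [Finset.prod_eq_zero (Finset.mem_univ i) (by rw [hM i, if_neg hi]), mul_zero]

/-- **Closure of the Z-support under the orbit**: if every diagonal element of the group `G`
generated by non-diagonal XP operators `A₀,…,A_{r−1}` and a set `S_Z` of diagonal XP operators
fixes the basis state `|e⟩`, then for every `v` every diagonal element of `G` also fixes
`(∏_i A_i^{v i})|e⟩`. -/
theorem orbit_elements_fixed (N n r : ℕ) (hN : 2 ≤ N) (hn : 1 ≤ n)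
    (A : Fin r → Matrix (Fin n → Fin 2) (Fin n → Fin 2) ℂ)
    (hA : ∀ i, ∃ p : ℤ, ∃ x z : Fin n → ℤ, IsBinary x ∧ A i = XP N n p x z)
    (SZ : Set (Matrix (Fin n → Fin 2) (Fin n → Fin 2) ℂ))
    (hSZ : ∀ B ∈ SZ, ∃ p : ℤ, ∃ z : Fin n → ℤ, B = XP N n p 0 z)
    (G : Subgroup (Matrix (Fin n → Fin 2) (Fin n → Fin 2) ℂ)ˣ)
    (hG : G = Subgroup.closure
      {g : (Matrix (Fin n → Fin 2) (Fin n → Fin 2) ℂ)ˣ | (g : Matrix _ _ ℂ) ∈ Set.range A ∪ SZ})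
    (e : Fin n → Fin 2)
    (he : ∀ g ∈ G, Matrix.IsDiag ((g : Matrix (Fin n → Fin 2) (Fin n → Fin 2) ℂ)) →
      ((g : Matrix (Fin n → Fin 2) (Fin n → Fin 2) ℂ)).mulVec (Pi.single e 1) = Pi.single e 1) :
    ∀ v : Fin r → Fin 2, ∀ g ∈ G,
      Matrix.IsDiag ((g : Matrix (Fin n → Fin 2) (Fin n → Fin 2) ℂ)) →
      ((g : Matrix (Fin n → Fin 2) (Fin n → Fin 2) ℂ)).mulVec
          (((List.ofFn fun i => A i ^ (v i : ℕ)).prod).mulVec (Pi.single e 1)) =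
        ((List.ofFn fun i => A i ^ (v i : ℕ)).prod).mulVec (Pi.single e 1) := by
  intro v g hg hdiag
  have hmono : ∀ i, Mono (A i) := fun i => by
    obtain ⟨p, x, z, hx, hAi⟩ := hA i
    rw [hAi]; exact mono_XP p x z hx
  choose u hu using fun i => (hmono i).exists_unit
  have huG : ∀ i, u i ∈ G := fun i => by
    rw [hG]
    exact Subgroup.subset_closure (Or.inl ⟨i, (hu i).symm⟩)
  set m : (Mat n)ˣ := (List.ofFn fun i => u i ^ (v i : ℕ)).prod with hmdef
  have hmG : m ∈ G := by
    apply list_prod_mem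
    intro w hw
    rw [List.mem_ofFn] at hw
    obtain ⟨i, rfl⟩ := hw
    exact pow_mem (huG i) _
  have hmval : (↑m : Mat n) = (List.ofFn fun i => A i ^ (v i : ℕ)).prod := by
    rw [hmdef, ← Units.coeHom_apply, map_list_prod, List.map_ofFn]
    have hcomp : (⇑(Units.coeHom (Mat n)) ∘ fun i => u i ^ (v i : ℕ))
        = fun i => A i ^ (v i : ℕ) := by
      funext i
      simp [Function.comp, Units.val_pow_eq_pow_val, hu]
    rw [hcomp]
  have hmonoM : Mono (↑m : Mat n) := by
    rw [hmval]
    apply mono_list_prod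
    intro M hM
    rw [List.mem_ofFn] at hM
    obtain ⟨i, rfl⟩ := hM
    exact (hmono i).pow _
  have hhG : m⁻¹ * g * m ∈ G := mul_mem (mul_mem (inv_mem hmG) hg) hmG
  have hhdiag : Matrix.IsDiag (↑(m⁻¹ * g * m) : Mat n) := by
    have h2 := hmonoM.conj_isDiag m rfl hdiag
    simpa [Units.val_mul, mul_assoc] using h2
  have hfix := he _ hhG hhdiag
  have key : (↑(m * (m⁻¹ * g * m)) : Mat n).mulVec (Pi.single e 1)
      = (↑m : Mat n).mulVec (Pi.single e 1) := by
    rw [Units.val_mul, ← Matrix.mulVec_mulVec, hfix]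
  have hgm : m * (m⁻¹ * g * m) = g * m := by group
  rw [hgm, Units.val_mul, ← Matrix.mulVec_mulVec] at key
  rw [← hmval]
  exact key
end

section
/- Let K ≥ 1, let E₀, …, E_{K−1} be nonempty pairwise disjoint sets of bit strings in Fin n → Fin 2 all of the same (finite) cardinality, let φ_i : (Fin n → Fin 2) → ℤ, and set κ_i = ∑ over e ∈ E_i of ω^(φ_i e) • |e⟩, with C = Submodule.span ℂ {κ₀, …, κ_{K−1}}. Let A be an XP operator of precision N with binary x-component. Then A maps C into C if and only if there exist a permutation π of Fin K with π ∘ π = id and f : Fin K → ℤ such that A.mulVec κ_i = ω^(f i) • κ_{π i} for all i; that is, an XP operator is a logical operator exactly when its action on the codewords is an order-at-most-2 permutation of the codewords combined with a phase ω^{f[i]} applied to each codeword. -/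
open Matrix

lemma om2_ne_zero (N : ℕ) : (omN N) ^ 2 ≠ 0 := pow_ne_zero _ (omN_ne_zero N)

lemma Pm_det_isUnit (N : ℕ) : IsUnit (Pm N).det := by
  rw [Pm, Matrix.det_fin_two_of]
  simpa using (om2_ne_zero N).isUnit

lemma Pm_inv (N : ℕ) : (Pm N)⁻¹ = !![1, 0; 0, ((omN N) ^ 2)⁻¹] := by
  apply inv_eq_right_inv
  rw [Pm, Matrix.mul_fin_two, Matrix.one_fin_two, mul_inv_cancel₀ (om2_ne_zero N)]
  norm_num

lemma Pm_zpow_s18 (N : ℕ) (k : ℤ) : (Pm N) ^ k = !![1, 0; 0, ((omN N) ^ 2) ^ k] := by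
  induction k using Int.induction_on with
  | zero => rw [zpow_zero, zpow_zero, Matrix.one_fin_two]
  | succ m ih =>
      rw [Matrix.zpow_add_one (Pm_det_isUnit N), ih, Pm, Matrix.mul_fin_two,
        zpow_add_one₀ (om2_ne_zero N)]
      norm_num
  | pred m ih =>
      rw [show (-(m:ℤ) - 1) = (-(m:ℤ)) - 1 by ring,
        Matrix.zpow_sub_one (Pm_det_isUnit N), ih, Pm_inv, Matrix.mul_fin_two,
        zpow_sub_one₀ (om2_ne_zero N)]
      norm_num

def bshift {n : ℕ} (x : Fin n → ℤ) (e : Fin n → Fin 2) : Fin n → Fin 2 :=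
  fun i => e i + (if x i = 0 then 0 else 1)

lemma bshift_invol {n : ℕ} (x : Fin n → ℤ) : Function.Involutive (bshift x) := by
  intro e
  funext i
  have h : ∀ a b : Fin 2, a + b + b = a := by decide
  exact h (e i) _

lemma single_entry (N : ℕ) (xi zi : ℤ) (hxi : xi = 0 ∨ xi = 1) (a b : Fin 2) :
    ((Xm ^ xi) * (Pm N) ^ zi) a b
      = if a = b + (if xi = 0 then 0 else 1) then ((omN N) ^ 2) ^ (zi * ((b : ℕ) : ℤ)) else 0 := by
  rcases hxi with h | h <;> subst h
  · rw [zpow_zero, one_mul, Pm_zpow_s18]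
    fin_cases a <;> fin_cases b <;> simp
  · rw [zpow_one, Pm_zpow_s18, Xm, Matrix.mul_fin_two]
    fin_cases a <;> fin_cases b <;> norm_num
    · intro h; exact (h (by decide)).elim

lemma zpow_sum₀ {ι : Type*} {c : ℂ} (hc : c ≠ 0) (s : Finset ι) (m : ι → ℤ) :
    c ^ (∑ i ∈ s, m i) = ∏ i ∈ s, c ^ (m i) := by
  classical
  induction s using Finset.induction with
  | empty => simp
  | insert a s h ih => rw [Finset.sum_insert h, Finset.prod_insert h, zpow_add₀ hc, ih]

lemma XP_apply (N n : ℕ) (p : ℤ) (x z : Fin n → ℤ) (hx : IsBinary x)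
    (f e : Fin n → Fin 2) :
    XP N n p x z f e
      = if f = bshift x e then
          (omN N) ^ (p + 2 * ∑ i, z i * (((e i : ℕ) : ℤ))) else 0 := by
  have hom := omN_ne_zero N
  rw [XP]
  show (omN N) ^ p * ∏ i, ((Xm ^ (x i)) * (Pm N) ^ (z i)) (f i) (e i) = _
  by_cases h : f = bshift x e
  · rw [if_pos h]
    have hfac : ∀ i ∈ Finset.univ, ((Xm ^ (x i)) * (Pm N) ^ (z i)) (f i) (e i)
        = ((omN N) ^ 2) ^ (z i * ((e i : ℕ) : ℤ)) := by
      intro i _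
      rw [single_entry N (x i) (z i) (hx i), if_pos (by rw [h]; rfl)]
    rw [Finset.prod_congr rfl hfac, ← zpow_sum₀ (om2_ne_zero N),
      ← zpow_natCast (omN N) 2, ← _root_.zpow_mul, ← zpow_add₀ hom]
    norm_num
  · rw [if_neg h]
    have : ∃ i, f i ≠ bshift x e i := by
      by_contra hc
      push_neg at hc
      exact h (funext hc)
    obtain ⟨i, hi⟩ := this
    apply mul_eq_zero_of_right
    apply Finset.prod_eq_zero (Finset.mem_univ i)
    rw [single_entry N (x i) (z i) (hx i)]
    exact if_neg hi

lemma sum_single_apply {n : ℕ} (S : Finset (Fin n → Fin 2)) (c : (Fin n → Fin 2) → ℂ)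
    (f : Fin n → Fin 2) :
    (∑ e ∈ S, c e • (Pi.single e 1 : (Fin n → Fin 2) → ℂ)) f = if f ∈ S then c f else 0 := by
  classical
  rw [Finset.sum_apply]
  simp_rw [Pi.smul_apply, Pi.single_apply, smul_eq_mul, mul_ite, mul_one, mul_zero]
  exact Finset.sum_ite_eq S f c

lemma XP_mulVec_kappa (N n : ℕ) (p : ℤ) (x z : Fin n → ℤ) (hx : IsBinary x)
    (S : Finset (Fin n → Fin 2)) (c : (Fin n → Fin 2) → ℂ) :
    (XP N n p x z) *ᵥ (∑ e ∈ S, c e • (Pi.single e 1 : (Fin n → Fin 2) → ℂ))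
      = ∑ e ∈ S, (c e * (omN N) ^ (p + 2 * ∑ i, z i * (((e i : ℕ) : ℤ))))
          • (Pi.single (bshift x e) 1 : (Fin n → Fin 2) → ℂ) := by
  classical
  rw [← Matrix.mulVecLin_apply, map_sum]
  refine Finset.sum_congr rfl fun e he => ?_
  rw [LinearMap.map_smul, Matrix.mulVecLin_apply, Matrix.mulVec_single_one]
  funext f
  simp only [Pi.smul_apply, smul_eq_mul, mul_one, Pi.single_apply, Matrix.col_apply]
  rw [XP_apply N n p x z hx f e]
  by_cases hfe : f = bshift x e
  · rw [if_pos hfe, if_pos hfe, mul_one]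
  · rw [if_neg hfe, if_neg hfe, mul_zero, mul_zero]


/-- **Characterisation of logical XP operators**: for codewords
`κ_i = ∑_{e ∈ E_i} ω^(φ_i e) |e⟩` over nonempty, pairwise disjoint supports of equal size,
spanning the codespace `C`, an XP operator `A` maps `C` into `C` if and only if its action on
the codewords is an order-at-most-2 permutation combined with a phase on each codeword:
`A κ_i = ω^(f i) κ_{π i}`. -/
theorem logical_XP_iff_perm_phase (N n : ℕ) (hN : 2 ≤ N) (hn : 1 ≤ n) (K : ℕ) (hK : 1 ≤ K)
    (E : Fin K → Finset (Fin n → Fin 2))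
    (hne : ∀ i, (E i).Nonempty)
    (hdisj : ∀ i j, i ≠ j → Disjoint (E i) (E j))
    (hcard : ∀ i j, (E i).card = (E j).card)
    (φ : Fin K → (Fin n → Fin 2) → ℤ)
    (κ : Fin K → ((Fin n → Fin 2) → ℂ))
    (hκ : ∀ i, κ i = ∑ e ∈ E i, (omN N) ^ (φ i e) • (Pi.single e 1 : (Fin n → Fin 2) → ℂ))
    (C : Submodule ℂ ((Fin n → Fin 2) → ℂ))
    (hC : C = Submodule.span ℂ (Set.range κ))
    (p : ℤ) (x z : Fin n → ℤ) (hx : IsBinary x) :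
    (∀ w ∈ C, (XP N n p x z).mulVec w ∈ C) ↔
      ∃ π : Equiv.Perm (Fin K), (⇑π ∘ ⇑π = id) ∧ ∃ f : Fin K → ℤ,
        ∀ i, (XP N n p x z).mulVec (κ i) = (omN N) ^ (f i) • κ (π i) := by
  classical
  have hom := omN_ne_zero N
  set A := XP N n p x z with hA
  set m : (Fin n → Fin 2) → ℤ := fun e => p + 2 * ∑ i, z i * (((e i : ℕ) : ℤ)) with hm
  have hinj : Function.Injective (bshift x) := (bshift_invol x).injective
  -- action of A on κ i, in image form
  have hAκ : ∀ i, A *ᵥ κ i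
      = ∑ e ∈ (E i).image (bshift x),
          ((omN N) ^ (φ i (bshift x e) + m (bshift x e)))
            • (Pi.single e 1 : (Fin n → Fin 2) → ℂ) := by
    intro i
    rw [hκ i, XP_mulVec_kappa N n p x z hx,
      Finset.sum_image (fun a _ b _ h => hinj h)]
    refine Finset.sum_congr rfl fun e he => ?_
    rw [bshift_invol x e, ← zpow_add₀ hom]
  -- pointwise values
  have hval : ∀ i f, (A *ᵥ κ i) f
      = if f ∈ (E i).image (bshift x) then
          (omN N) ^ (φ i (bshift x f) + m (bshift x f)) else 0 := by
    intro i f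
    rw [hAκ i]
    exact sum_single_apply _ _ f
  have hκval : ∀ j f, κ j f = if f ∈ E j then (omN N) ^ (φ j f) else 0 := by
    intro j f
    rw [hκ j]
    exact sum_single_apply _ _ f
  constructor
  · intro hmem
    have key : ∀ i : Fin K, ∃ j : Fin K, ∃ t : ℤ,
        (E i).image (bshift x) = E j ∧ A *ᵥ κ i = (omN N) ^ t • κ j := by
      intro i
      have hin : A *ᵥ κ i ∈ C := hmem (κ i) (by rw [hC]; exact Submodule.subset_span ⟨i, rfl⟩)
      rw [hC, Submodule.mem_span_range_iff_exists_fun] at hin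
      obtain ⟨a, ha⟩ := hin
      have heval : ∀ f, (if f ∈ (E i).image (bshift x) then
            (omN N) ^ (φ i (bshift x f) + m (bshift x f)) else 0)
          = ∑ j, a j * (if f ∈ E j then (omN N) ^ (φ j f) else 0) := by
        intro f
        rw [← hval i f, ← ha, Finset.sum_apply]
        exact Finset.sum_congr rfl fun j _ => by rw [Pi.smul_apply, smul_eq_mul, hκval j f]
      set S : Finset (Fin K) := Finset.univ.filter (fun j => a j ≠ 0) with hS
      have hset : (E i).image (bshift x) = S.biUnion E := by
        ext f
        constructor
        · intro hf
          have h1 := heval f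
          rw [if_pos hf] at h1
          have hne0 : (∑ j, a j * (if f ∈ E j then (omN N) ^ (φ j f) else 0)) ≠ 0 := by
            rw [← h1]; exact zpow_ne_zero _ hom
          obtain ⟨j, -, hj⟩ := Finset.exists_ne_zero_of_sum_ne_zero hne0
          have hfj : f ∈ E j := by
            by_contra h
            rw [if_neg h, mul_zero] at hj
            exact hj rfl
          have haj : a j ≠ 0 := by
            intro h
            rw [h, zero_mul] at hj
            exact hj rfl
          exact Finset.mem_biUnion.2 ⟨j, Finset.mem_filter.2 ⟨Finset.mem_univ _, haj⟩, hfj⟩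
        · intro hf
          obtain ⟨j, hjS, hfj⟩ := Finset.mem_biUnion.1 hf
          have haj : a j ≠ 0 := (Finset.mem_filter.1 hjS).2
          by_contra hfnot
          have h1 := heval f
          rw [if_neg hfnot] at h1
          have hsingle : (∑ j', a j' * (if f ∈ E j' then (omN N) ^ (φ j' f) else 0))
              = a j * (omN N) ^ (φ j f) := by
            rw [Fintype.sum_eq_single j (fun b hb => ?_), if_pos hfj]
            have hb' : f ∉ E b := fun hfb => (Finset.disjoint_left.mp (hdisj b j hb) hfb) hfj
            rw [if_neg hb', mul_zero]
          rw [hsingle] at h1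
          rcases mul_eq_zero.1 h1.symm with h | h
          · exact haj h
          · exact zpow_ne_zero _ hom h
      have hScard : S.card = 1 := by
        have h1 : (E i).card = ∑ j ∈ S, (E j).card := by
          rw [← Finset.card_biUnion (fun j₁ _ j₂ _ hne' => hdisj j₁ j₂ hne'), ← hset,
            Finset.card_image_of_injective _ hinj]
        have h2 : ∑ j ∈ S, (E j).card = S.card * (E i).card := by
          rw [Finset.sum_congr rfl (fun j _ => hcard j i), Finset.sum_const, smul_eq_mul]
        have hpos : 0 < (E i).card := Finset.card_pos.2 (hne i)
        have h3 : 1 * (E i).card = S.card * (E i).card := by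
          rw [one_mul, ← h2, ← h1]
        exact (Nat.eq_of_mul_eq_mul_right hpos h3).symm
      obtain ⟨j, hj⟩ := Finset.card_eq_one.1 hScard
      have hEij : (E i).image (bshift x) = E j := by
        rw [hset, hj, Finset.singleton_biUnion]
      have hzero : ∀ b, b ≠ j → a b = 0 := by
        intro b hb
        by_contra h
        have hbS : b ∈ S := Finset.mem_filter.2 ⟨Finset.mem_univ _, h⟩
        rw [hj, Finset.mem_singleton] at hbS
        exact hb hbS
      have hsum : A *ᵥ κ i = a j • κ j := by
        rw [← ha, Fintype.sum_eq_single j (fun b hb => by rw [hzero b hb, zero_smul])]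
      obtain ⟨e₀, he₀⟩ := hne i
      have hf0 : bshift x e₀ ∈ (E i).image (bshift x) := Finset.mem_image_of_mem _ he₀
      have hf0' : bshift x e₀ ∈ E j := hEij ▸ hf0
      have h2 := congrFun hsum (bshift x e₀)
      rw [hval i, if_pos hf0, bshift_invol x e₀, Pi.smul_apply, smul_eq_mul,
        hκval j, if_pos hf0'] at h2
      refine ⟨j, φ i e₀ + m e₀ - φ j (bshift x e₀), hEij, ?_⟩
      rw [hsum]
      congr 1
      rw [zpow_sub₀ hom, eq_div_iff (zpow_ne_zero _ hom)]
      exact h2.symm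
    choose g t h1 h2 using key
    have hginv : Function.Involutive g := by
      intro i
      have hE : E (g (g i)) = E i := by
        rw [← h1 (g i), ← h1 i, Finset.image_image]
        have : (bshift x) ∘ (bshift x) = id := funext fun e => bshift_invol x e
        rw [this, Finset.image_id]
      by_contra hne'
      have hd := hdisj _ _ hne'
      rw [hE] at hd
      obtain ⟨e, he⟩ := hne i
      exact (Finset.disjoint_left.mp hd he) he
    refine ⟨hginv.toPerm g, funext fun i => hginv i, t, fun i => ?_⟩
    rw [h2 i]
    congr 1
  · rintro ⟨π, hπ, f, hf⟩
    intro w hw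
    rw [hC] at hw ⊢
    induction hw using Submodule.span_induction with
    | mem u hu =>
        obtain ⟨i, rfl⟩ := hu
        rw [hf i]
        exact Submodule.smul_mem _ _ (Submodule.subset_span ⟨π i, rfl⟩)
    | zero => rw [Matrix.mulVec_zero]; exact Submodule.zero_mem _
    | add u v _ _ hu hv => rw [Matrix.mulVec_add]; exact Submodule.add_mem _ hu hv
    | smul c u _ hu => rw [Matrix.mulVec_smul]; exact Submodule.smul_mem _ _ hu
end
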